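/- For all natural numbers s, t ≥ 1, the resilience of the t-th power of the path graph on t(2^s − 1) vertices is at most s·t. -/

import Mathlib

open SimpleGraph

/-- One step of a disintegration: `D` consists of exactly one vertex from each
connected component of the subgraph of `G` induced on `R`. -/
def DisStep {V : Type*} (G : SimpleGraph V) (R D : Set V) : Prop :=
  ∃ hsub : D ⊆ R,
    (∀ (v w : V) (hv : v ∈ D) (hw : w ∈ D), v ≠ w →
      (G.induce R).connectedComponentMk ⟨v, hsub hv⟩ ≠
        (G.induce R).connectedComponentMk ⟨w, hsub hw⟩) ∧
    (∀ c : (G.induce R).ConnectedComponent, ∃ (v : V) (hv : v ∈ D),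
      (G.induce R).connectedComponentMk ⟨v, hsub hv⟩ = c)

/-- `(D 0, D 1, ..., D (r-1))` is a disintegration of `G`: the steps partition the
vertex set and each step removes exactly one vertex per connected component of what remains. -/
def IsDisintegration {V : Type*} (G : SimpleGraph V) (D : ℕ → Set V) (r : ℕ) : Prop :=
  (∀ i, r ≤ i → D i = ∅) ∧ (⋃ i, D i) = Set.univ ∧
    ∀ i, DisStep G (Set.univ \ ⋃ j < i, D j) (D i)

/-- The graph resilience: minimal length of a disintegration. -/
noncomputable def resilience {V : Type*} (G : SimpleGraph V) : ℕ :=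
  sInf {r | ∃ D, IsDisintegration G D r}

/-- The `t`-th power of a graph: two distinct vertices are adjacent when their
graph distance in `G` is at most `t`. -/
def powerGraph {V : Type*} (G : SimpleGraph V) (t : ℕ) : SimpleGraph V :=
  SimpleGraph.fromRel (fun a b => G.Reachable a b ∧ G.dist a b ≤ t)


def lev (b : ℕ) : ℕ := padicValNat 2 (b + 1)

lemma lev_lt {s b : ℕ} (h : b + 1 < 2 ^ s) : lev b < s := by
  have h1 : 2 ^ lev b ≤ b + 1 := Nat.le_of_dvd (by omega) pow_padicValNat_dvd
  exact (Nat.pow_lt_pow_iff_right (by norm_num)).mp (lt_of_le_of_lt h1 h)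

lemma lev_dvd_iff {k b : ℕ} : 2 ^ k ∣ (b + 1) ↔ k ≤ lev b := by
  haveI := Nat.fact_prime_two
  exact padicValNat_dvd_iff_le (by omega)

lemma lev_mul_pow {m k : ℕ} : lev ((2 * m + 1) * 2 ^ k - 1) = k := by
  haveI := Nat.fact_prime_two
  have hpos : 1 ≤ (2 * m + 1) * 2 ^ k := Nat.one_le_iff_ne_zero.mpr (by positivity)
  have : (2 * m + 1) * 2 ^ k - 1 + 1 = (2 * m + 1) * 2 ^ k := by omega
  rw [lev, this, padicValNat.mul (by omega) (by positivity),
    padicValNat.prime_pow, padicValNat.eq_zero_of_not_dvd (by omega), zero_add]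

lemma pathWalk : ∀ (k n : ℕ) (a b : Fin n), a.val + k = b.val →
    ∃ w : (pathGraph n).Walk a b, w.length = k := by
  intro k
  induction k with
  | zero =>
    intro n a b h
    have : a = b := Fin.ext (by omega)
    subst this; exact ⟨Walk.nil, rfl⟩
  | succ k ih =>
    intro n a b h
    have ha1 : a.val + 1 < n := by have := b.isLt; omega
    obtain ⟨w, hw⟩ := ih n ⟨a.val + 1, ha1⟩ b (by simp; omega)
    exact ⟨Walk.cons (pathGraph_adj.mpr (Or.inl rfl)) w, by simp [hw]⟩

lemma pathWalk_le {n : ℕ} {a b : Fin n} (w : (pathGraph n).Walk a b) :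
    b.val - a.val ≤ w.length ∧ a.val - b.val ≤ w.length := by
  induction w with
  | nil => simp
  | cons h p ih =>
    rw [pathGraph_adj] at h
    rw [Walk.length_cons]
    omega

lemma pathGraph_dist {n : ℕ} (hn : 0 < n) (a b : Fin n) :
    (pathGraph n).dist a b = max a.val b.val - min a.val b.val := by
  obtain ⟨m, rfl⟩ : ∃ m, n = m + 1 := ⟨n - 1, by omega⟩
  refine le_antisymm ?_ ?_
  · rcases le_total a.val b.val with h | h
    · obtain ⟨w, hw⟩ := pathWalk (b.val - a.val) (m+1) a b (by omega)
      have := SimpleGraph.dist_le w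
      omega
    · obtain ⟨w, hw⟩ := pathWalk (a.val - b.val) (m+1) b a (by omega)
      have := SimpleGraph.dist_le w
      rw [SimpleGraph.dist_comm]
      omega
  · obtain ⟨w, hw⟩ := ((pathGraph_connected m).preconnected a b).exists_walk_length_eq_dist
    have := pathWalk_le w
    omega

lemma powerPath_adj {n t : ℕ} (hn : 0 < n) (a b : Fin n) :
    (powerGraph (pathGraph n) t).Adj a b ↔ a ≠ b ∧ b.val ≤ a.val + t ∧ a.val ≤ b.val + t := by
  obtain ⟨m, rfl⟩ : ∃ m, n = m + 1 := ⟨n - 1, by omega⟩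
  rw [powerGraph, fromRel_adj]
  constructor
  · rintro ⟨hne, h | h⟩ <;>
    · have hd := h.2
      rw [pathGraph_dist hn] at hd
      exact ⟨hne, by omega, by omega⟩
  · rintro ⟨hne, h1, h2⟩
    exact ⟨hne, Or.inl ⟨(pathGraph_connected m).preconnected a b,
      by rw [pathGraph_dist hn]; omega⟩⟩
def ph (s b : ℕ) : ℕ := s - 1 - lev b

def stepIdx (s t v : ℕ) : ℕ := ph s (v / t) * t + v % t

def grp (s t j v : ℕ) : ℕ := (v / t + 1) / 2 ^ (s - j)

lemma div_mod_eq {t b r x : ℕ} (hx : x = t * b + r) (hr : r < t) :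
    x / t = b ∧ x % t = r := by
  subst hx
  constructor
  · rw [show t * b + r = r + b * t by ring, Nat.add_mul_div_right _ _ (by omega),
      Nat.div_eq_of_lt hr]
    omega
  · rw [show t * b + r = r + b * t by ring, Nat.add_mul_mod_self_right,
      Nat.mod_eq_of_lt hr]

lemma stepIdx_eq {s t b r x : ℕ} (hx : x = t * b + r) (hr : r < t) :
    stepIdx s t x = ph s b * t + r := by
  obtain ⟨h1, h2⟩ := div_mod_eq hx hr
  unfold stepIdx
  rw [h1, h2]

lemma step_lt_of_ph_lt {t j p a r : ℕ} (h : a < j) (hr : r < t) :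
    a * t + r < j * t + p := by
  have h1 : (a + 1) * t ≤ j * t := Nat.mul_le_mul_right t (by omega)
  have h2 : a * t + t = (a + 1) * t := by ring
  omega

lemma step_ge_cases {t j p a r : ℕ} (hr : r < t) (hp : p < t)
    (h : j * t + p ≤ a * t + r) : j < a ∨ (j = a ∧ p ≤ r) := by
  rcases lt_trichotomy a j with h' | h' | h'
  · exact absurd h (not_le.mpr (step_lt_of_ph_lt h' hr))
  · subst h'; omega
  · exact Or.inl h'

lemma block_lt {s t v : ℕ} (ht : 1 ≤ t) (hv : v < t * (2 ^ s - 1)) :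
    v / t + 1 < 2 ^ s := by
  have h2 : 1 ≤ 2 ^ s := Nat.one_le_two_pow
  have : v / t < 2 ^ s - 1 := (Nat.div_lt_iff_lt_mul (by omega)).mpr
    (by rw [mul_comm] at hv; exact hv)
  omega

lemma stepIdx_lt {s t v : ℕ} (hs : 1 ≤ s) (ht : 1 ≤ t) (hv : v < t * (2 ^ s - 1)) :
    stepIdx s t v < s * t := by
  have h1 : ph s (v / t) ≤ s - 1 := Nat.sub_le _ _
  have h2 : v % t < t := Nat.mod_lt _ (by omega)
  have h3 : ph s (v / t) < s := by omega
  calc stepIdx s t v < ph s (v / t) * t + t := by unfold stepIdx; omega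
  _ = (ph s (v / t) + 1) * t := by ring
  _ ≤ s * t := Nat.mul_le_mul_right t (by omega)

lemma grp_mono {s t j v w : ℕ} (h : v ≤ w) : grp s t j v ≤ grp s t j w :=
  Nat.div_le_div_right (by have := Nat.div_le_div_right (c := t) h; omega)

lemma grp_lower {s t j v : ℕ} : grp s t j v * 2 ^ (s - j) ≤ v / t + 1 :=
  Nat.div_mul_le_self _ _

lemma grp_upper {s t j v : ℕ} : v / t + 1 < (grp s t j v + 1) * 2 ^ (s - j) := by
  have hkpos : 0 < (2:ℕ) ^ (s - j) := Nat.pow_pos (by norm_num)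
  have hdm := Nat.div_add_mod (v / t + 1) (2 ^ (s - j))
  have hmod : (v / t + 1) % 2 ^ (s - j) < 2 ^ (s - j) := Nat.mod_lt _ hkpos
  have hcomm : 2 ^ (s - j) * ((v / t + 1) / 2 ^ (s - j)) =
      (v / t + 1) / 2 ^ (s - j) * 2 ^ (s - j) := mul_comm _ _
  have hadd : (grp s t j v + 1) * 2 ^ (s - j) =
      grp s t j v * 2 ^ (s - j) + 2 ^ (s - j) := by ring
  unfold grp at *
  omega

/-- blocks strictly between two blocks of the same group have phase ≥ j -/
lemma ph_between {s t j v w b : ℕ} (hj : j < s) (hb1 : v / t < b) (hb2 : b < w / t)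
    (hg : grp s t j v = grp s t j w) : j ≤ ph s b := by
  have h1 := grp_lower (s := s) (t := t) (j := j) (v := v)
  have h2 := grp_upper (s := s) (t := t) (j := j) (v := w)
  rw [← hg] at h2
  set q := grp s t j v with hq
  have hnd : ¬ 2 ^ (s - j) ∣ (b + 1) := by
    rintro ⟨c, hc⟩
    have hcq : q < c := by
      have h3 : q * 2 ^ (s - j) < 2 ^ (s - j) * c := by omega
      rw [mul_comm _ c] at h3
      exact Nat.lt_of_mul_lt_mul_right h3
    have h4 : (q + 1) * 2 ^ (s - j) ≤ c * 2 ^ (s - j) :=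
      Nat.mul_le_mul_right _ (by omega)
    have h5 : c * 2 ^ (s - j) = 2 ^ (s - j) * c := mul_comm _ _
    omega
  have : ¬ (s - j ≤ lev b) := fun h => hnd (lev_dvd_iff.mpr h)
  unfold ph; omega

/-- The successor lemma: within a group, the next remaining vertex is at distance ≤ t. -/
lemma succ_lemma {s t j p v w : ℕ} (ht : 1 ≤ t) (hj : j < s) (hp : p < t)
    (hvw : v < w) (hw : w < t * (2 ^ s - 1))
    (hv' : j * t + p ≤ stepIdx s t v) (hw' : j * t + p ≤ stepIdx s t w)
    (hg : grp s t j v = grp s t j w) :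
    ∃ u, v < u ∧ u ≤ w ∧ u ≤ v + t ∧ j * t + p ≤ stepIdx s t u := by
  by_cases hc : j * t + p ≤ stepIdx s t (v + 1)
  · exact ⟨v + 1, by omega, by omega, by omega, hc⟩
  push_neg at hc
  obtain ⟨b, r, hvd, hrt⟩ : ∃ b r, v = t * b + r ∧ r < t :=
    ⟨v / t, v % t, (Nat.div_add_mod v t).symm, Nat.mod_lt _ (by omega)⟩
  obtain ⟨bw, rw', hwd, hwt⟩ : ∃ bw rw', w = t * bw + rw' ∧ rw' < t :=
    ⟨w / t, w % t, (Nat.div_add_mod w t).symm, Nat.mod_lt _ (by omega)⟩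
  have hsv : stepIdx s t v = ph s b * t + r := stepIdx_eq hvd hrt
  have hsw : stepIdx s t w = ph s bw * t + rw' := stepIdx_eq hwd hwt
  -- show r = t - 1
  have hrt1 : r + 1 = t := by
    by_contra hne
    have hsc : stepIdx s t (v + 1) = ph s b * t + (r + 1) :=
      stepIdx_eq (by omega) (by omega)
    omega
  have e1 : t * (b + 1) = t * b + t := by ring
  have hsc : stepIdx s t (v + 1) = ph s (b + 1) * t + 0 :=
    stepIdx_eq (by omega) (by omega)
  have hple : ph s (b + 1) ≤ j := by
    by_contra hgt
    push_neg at hgt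
    have := step_lt_of_ph_lt (t := t) (p := 0) (r := p) hgt hp
    omega
  have hbwge : b + 1 ≤ bw := by
    by_contra hlt
    push_neg at hlt
    have : t * bw ≤ t * b := Nat.mul_le_mul_left t (by omega)
    omega
  have hdv := div_mod_eq hvd hrt
  have hdw := div_mod_eq hwd hwt
  have hphj : ph s (b + 1) = j ∧ (bw = b + 1 → p ≤ rw') := by
    rcases Nat.eq_or_lt_of_le hbwge with heq | hlt
    · rw [← heq] at hsw
      rw [hsw] at hw'
      rcases step_ge_cases hwt hp hw' with h' | ⟨h', h''⟩
      · omega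
      · exact ⟨h'.symm, fun _ => h''⟩
    · have hbv : v / t < b + 1 := by omega
      have hbw2 : b + 1 < w / t := by omega
      have := ph_between hj hbv hbw2 hg
      exact ⟨by omega, fun h => by omega⟩
  have hsu : stepIdx s t (t * (b + 1) + p) = ph s (b + 1) * t + p :=
    stepIdx_eq rfl hp
  refine ⟨t * (b + 1) + p, by omega, ?_, by omega, by rw [hsu, hphj.1]⟩
  rcases Nat.eq_or_lt_of_le hbwge with heq | hlt
  · have h5 := hphj.2 heq.symm
    have h6 : t * (b + 1) = t * bw := by rw [heq]
    omega
  · have h6 : t * (b + 2) ≤ t * bw := Nat.mul_le_mul_left t (by omega)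
    have h7 : t * (b + 2) = t * (b + 1) + t := by ring
    omega
lemma grp_eq_of_close {s t j p v w : ℕ} (ht : 1 ≤ t) (hj : j < s) (hp : p < t)
    (hv : v < t * (2 ^ s - 1)) (hw : w < t * (2 ^ s - 1))
    (hsv : j * t + p ≤ stepIdx s t v) (hsw : j * t + p ≤ stepIdx s t w)
    (hvw : v ≤ w) (hd : w ≤ v + t) : grp s t j v = grp s t j w := by
  rcases Nat.eq_zero_or_pos j with hj0 | hjpos
  · subst hj0
    have h1 := block_lt ht hv
    have h2 := block_lt ht hw
    unfold grp
    rw [Nat.sub_zero, Nat.div_eq_of_lt h1, Nat.div_eq_of_lt h2]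
  refine le_antisymm (grp_mono hvw) ?_
  by_contra hlt
  push_neg at hlt
  set q := grp s t j v with hq
  have hBle : (q + 1) * 2 ^ (s - j) ≤ w / t + 1 := by
    have h3 := grp_lower (s := s) (t := t) (j := j) (v := w)
    have h4 : (q + 1) * 2 ^ (s - j) ≤ grp s t j w * 2 ^ (s - j) :=
      Nat.mul_le_mul_right _ hlt
    omega
  have hBv : v / t + 1 < (q + 1) * 2 ^ (s - j) := grp_upper
  rcases Nat.eq_or_lt_of_le hBle with heq | hlt2
  · have hdvd : 2 ^ (s - j) ∣ (w / t + 1) := ⟨q + 1, by rw [← heq]; ring⟩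
    have hlev : s - j ≤ lev (w / t) := lev_dvd_iff.mp hdvd
    have hph : ph s (w / t) < j := by unfold ph; omega
    have hst : stepIdx s t w = ph s (w / t) * t + w % t := rfl
    have := step_lt_of_ph_lt (p := p) hph (Nat.mod_lt w (show 0 < t by omega))
    omega
  · have h8 : (q + 1) * 2 ^ (s - j) ≤ w / t := by omega
    have h9 : t * ((v / t) + 2) ≤ t * ((q + 1) * 2 ^ (s - j)) :=
      Nat.mul_le_mul_left t (by omega)
    have h10 : t * ((q + 1) * 2 ^ (s - j)) ≤ t * (w / t) := Nat.mul_le_mul_left t h8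
    have h11 : t * (w / t) ≤ w := Nat.mul_div_le w t
    have h12 : v < t * (v / t) + t := by
      have := Nat.div_add_mod v t
      have := Nat.mod_lt v (show 0 < t by omega)
      omega
    have h13 : t * (v / t + 2) = t * (v / t) + t + t := by ring
    omega

lemma block_form {s t j p x : ℕ} (ht : 1 ≤ t) (hj : j < s) (hp : p < t)
    (hx : x < t * (2 ^ s - 1)) (h1 : stepIdx s t x = j * t + p) :
    x % t = p ∧ x / t + 1 = 2 ^ (s - 1 - j) * (2 * grp s t j x + 1) := by
  have hmod : x % t < t := Nat.mod_lt _ (by omega)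
  have hst : stepIdx s t x = ph s (x / t) * t + x % t := rfl
  have hphj : ph s (x / t) = j ∧ x % t = p := by
    rcases lt_trichotomy (ph s (x / t)) j with h' | h' | h'
    · have := step_lt_of_ph_lt (p := p) h' hmod
      omega
    · refine ⟨h', ?_⟩
      have hb : ph s (x / t) * t = j * t := by rw [h']
      omega
    · have := step_lt_of_ph_lt (p := x % t) h' hp
      omega
  have hlev_lt : lev (x / t) < s := lev_lt (block_lt ht hx)
  have hlev : lev (x / t) = s - 1 - j := by
    have := hphj.1
    unfold ph at this
    omega
  have hdvd : 2 ^ (s - 1 - j) ∣ (x / t + 1) := lev_dvd_iff.mpr (by omega)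
  have hndvd : ¬ 2 ^ (s - j) ∣ (x / t + 1) := fun h => by
    have := lev_dvd_iff.mp h; omega
  obtain ⟨a, ha⟩ := hdvd
  have hpow : (2:ℕ) ^ (s - j) = 2 ^ (s - 1 - j) * 2 := by
    rw [← pow_succ]; congr 1; omega
  have hodd : a % 2 = 1 := by
    rcases Nat.mod_two_eq_zero_or_one a with h | h
    · exfalso
      apply hndvd
      refine ⟨a / 2, ?_⟩
      rw [ha, hpow, mul_assoc]
      congr 1
      omega
    · exact h
  have hgrp : grp s t j x = a / 2 := by
    unfold grp
    rw [ha, hpow, Nat.mul_div_mul_left _ _ (Nat.pow_pos (by norm_num))]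
  refine ⟨hphj.2, ?_⟩
  rw [ha, hgrp]
  congr 1
  omega

lemma uniq_lemma {s t j p v w : ℕ} (ht : 1 ≤ t) (hj : j < s) (hp : p < t)
    (hv : v < t * (2 ^ s - 1)) (hw : w < t * (2 ^ s - 1))
    (h1 : stepIdx s t v = j * t + p) (h2 : stepIdx s t w = j * t + p)
    (hg : grp s t j v = grp s t j w) : v = w := by
  obtain ⟨hm1, hb1⟩ := block_form ht hj hp hv h1
  obtain ⟨hm2, hb2⟩ := block_form ht hj hp hw h2
  rw [hg] at hb1
  have hdiv : v / t = w / t := by omega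
  have e1 := Nat.div_add_mod v t
  have e2 := Nat.div_add_mod w t
  have e3 : t * (v / t) = t * (w / t) := by rw [hdiv]
  omega

lemma witness_lemma {s t j p w : ℕ} (ht : 1 ≤ t) (hj : j < s) (hp : p < t)
    (hw : w < t * (2 ^ s - 1)) :
    ∃ u, u < t * (2 ^ s - 1) ∧ stepIdx s t u = j * t + p ∧
      grp s t j u = grp s t j w := by
  set q := grp s t j w with hq
  have h1 := block_lt ht hw
  have hq2 : q < 2 ^ j := by
    have hpow : (2:ℕ) ^ j * 2 ^ (s - j) = 2 ^ s := by rw [← pow_add]; congr 1; omega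
    by_contra h
    push_neg at h
    have h2 := grp_lower (s := s) (t := t) (j := j) (v := w)
    have h3 : (2:ℕ) ^ j * 2 ^ (s - j) ≤ q * 2 ^ (s - j) := Nat.mul_le_mul_right _ h
    rw [← hq] at h2
    omega
  set K := (2:ℕ) ^ (s - 1 - j) with hK
  have hKpos : 0 < K := Nat.pow_pos (by norm_num)
  have hpow2 : K * 2 = 2 ^ (s - j) := by rw [hK, ← pow_succ]; congr 1; omega
  have hpowS : (2:ℕ) ^ j * (K * 2) = 2 ^ s := by rw [hpow2, ← pow_add]; congr 1; omega
  set B := (2 * q + 1) * K with hB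
  have hBpos : 0 < B := by positivity
  have hBle : B ≤ 2 ^ s - 1 := by
    have ha : 2 * q + 1 ≤ 2 * 2 ^ j - 1 := by omega
    have hb : B ≤ (2 * 2 ^ j - 1) * K := Nat.mul_le_mul_right _ ha
    have hc : (2 * 2 ^ j - 1) * K = 2 * 2 ^ j * K - 1 * K := Nat.sub_mul _ _ _
    have hd : 2 * 2 ^ j * K = 2 ^ s := by rw [← hpowS]; ring
    have h2s : (1:ℕ) ≤ 2 ^ s := Nat.one_le_two_pow
    omega
  refine ⟨t * (B - 1) + p, ?_, ?_, ?_⟩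
  · have h5 : B - 1 + 1 = B := by omega
    have h6 : t * (B - 1 + 1) = t * (B - 1) + t := by ring
    have h7 : t * B ≤ t * (2 ^ s - 1) := Nat.mul_le_mul_left t hBle
    rw [h5] at h6
    omega
  · have hst : stepIdx s t (t * (B - 1) + p) = ph s (B - 1) * t + p := stepIdx_eq rfl hp
    have hlev : lev (B - 1) = s - 1 - j := by rw [hB, hK]; exact lev_mul_pow
    have hphB : ph s (B - 1) = j := by unfold ph; rw [hlev]; omega
    rw [hst, hphB]
  · have hdm := div_mod_eq (rfl : t * (B - 1) + p = t * (B - 1) + p) hp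
    unfold grp
    rw [hdm.1]
    have hB1 : B - 1 + 1 = B := by omega
    rw [hB1, hB, ← hpow2, mul_comm (2 * q + 1) K,
      Nat.mul_div_mul_left _ _ hKpos]
    omega
theorem stmt11 (s t : ℕ) (hs : 1 ≤ s) (ht : 1 ≤ t) :
    resilience (powerGraph (SimpleGraph.pathGraph (t * (2 ^ s - 1))) t) ≤ s * t := by
  have h2s : 1 < 2 ^ s := Nat.one_lt_two_pow_iff.mpr (by omega)
  set n := t * (2 ^ s - 1) with hn
  have hn1 : 1 ≤ n := by
    have : 1 * 1 ≤ t * (2 ^ s - 1) := Nat.mul_le_mul (by omega) (by omega)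
    omega
  set G := powerGraph (pathGraph n) t with hG
  set D : ℕ → Set (Fin n) := fun k => {v | stepIdx s t v.val = k} with hD
  apply Nat.sInf_le
  refine ⟨D, ?_, ?_, ?_⟩
  · intro i hi
    ext v
    simp only [hD, Set.mem_setOf_eq, Set.mem_empty_iff_false, iff_false]
    intro h
    have := stepIdx_lt hs ht v.isLt
    omega
  · ext v
    simp only [hD, Set.mem_iUnion, Set.mem_setOf_eq, Set.mem_univ, iff_true]
    exact ⟨stepIdx s t v.val, rfl⟩
  · intro i
    have hR : (Set.univ \ ⋃ k, ⋃ (_ : k < i), D k) =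
        {v : Fin n | i ≤ stepIdx s t v.val} := by
      ext v
      simp only [hD, Set.mem_diff, Set.mem_univ, true_and, Set.mem_iUnion,
        Set.mem_setOf_eq, not_exists]
      constructor
      · intro h
        by_contra hc
        push_neg at hc
        exact h _ hc rfl
      · intro h k hk he
        omega
    rw [hR]
    set R : Set (Fin n) := {v : Fin n | i ≤ stepIdx s t v.val} with hRdef
    have hsub : D i ⊆ R := fun v hv =>
      le_of_eq ((hv : stepIdx s t v.val = i)).symm
    rcases lt_or_ge i (s * t) with hilt | hige
    swap
    · -- trivial case: everything already removed
      refine ⟨hsub, ?_, ?_⟩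
      · intro v w hv hw hne
        exfalso
        have h1 : stepIdx s t v.val = i := hv
        have := stepIdx_lt hs ht v.isLt
        omega
      · intro c
        exfalso
        obtain ⟨x, hx⟩ := c.exists_rep
        have h1 : i ≤ stepIdx s t x.val.val := x.2
        have := stepIdx_lt hs ht x.val.isLt
        omega
    -- main case
    have hj : i / t < s := (Nat.div_lt_iff_lt_mul (by omega)).mpr hilt
    have hp : i % t < t := Nat.mod_lt _ (by omega)
    set j := i / t with hjdef
    set p := i % t with hpdef
    have hi2 : i = j * t + p := (Nat.div_add_mod' i t).symm
    -- direction A : reachable implies same group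
    have reachA : ∀ (x y : ↥R), (G.induce R).Reachable x y →
        grp s t j x.val.val = grp s t j y.val.val := by
      intro x y hxy
      obtain ⟨wk⟩ := hxy
      induction wk with
      | nil => rfl
      | @cons a b c ha wt ih =>
        refine Eq.trans ?_ ih
        have hadj : G.Adj a.val b.val := ha
        rw [hG, powerPath_adj (by omega)] at hadj
        obtain ⟨hne, hd1, hd2⟩ := hadj
        have hma : i ≤ stepIdx s t a.val.val := a.2
        have hmb : i ≤ stepIdx s t b.val.val := b.2
        rcases le_total a.val.val b.val.val with hle | hle
        · exact grp_eq_of_close ht hj hp a.val.isLt b.val.isLt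
            (by omega) (by omega) hle (by omega)
        · exact (grp_eq_of_close ht hj hp b.val.isLt a.val.isLt
            (by omega) (by omega) hle (by omega)).symm
    -- direction B : same group implies reachable
    have reachB : ∀ d (x y : ↥R), y.val.val = x.val.val + d →
        grp s t j x.val.val = grp s t j y.val.val → (G.induce R).Reachable x y := by
      intro d
      induction d using Nat.strong_induction_on with
      | _ d ih =>
        intro x y hd hg
        rcases Nat.eq_zero_or_pos d with h0 | hpos
        · have hxy : x = y := Subtype.ext (Fin.ext (by omega))
          rw [hxy]
        · have hmx : i ≤ stepIdx s t x.val.val := x.2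
          have hmy : i ≤ stepIdx s t y.val.val := y.2
          obtain ⟨u, hu1, hu2, hu3, hu4⟩ := succ_lemma ht hj hp
            (show x.val.val < y.val.val by omega) y.val.isLt
            (by omega) (by omega) hg
          have hun : u < n := lt_of_le_of_lt hu2 y.val.isLt
          have humem : (⟨u, hun⟩ : Fin n) ∈ R := by
            show i ≤ stepIdx s t u
            omega
          have hadj : (G.induce R).Adj x ⟨⟨u, hun⟩, humem⟩ := by
            show G.Adj x.val ⟨u, hun⟩
            rw [hG, powerPath_adj (by omega)]
            have e : ((⟨u, hun⟩ : Fin n) : ℕ) = u := rfl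
            exact ⟨Fin.ne_of_val_ne (by rw [e]; omega), by rw [e]; omega,
              by rw [e]; omega⟩
          have hgu : grp s t j u = grp s t j y.val.val := by
            have g1 := grp_mono (s := s) (t := t) (j := j)
              (show x.val.val ≤ u by omega)
            have g2 := grp_mono (s := s) (t := t) (j := j)
              (show u ≤ y.val.val by omega)
            omega
          exact hadj.reachable.trans
            (ih (d - (u - x.val.val)) (by omega) ⟨⟨u, hun⟩, humem⟩ y
              (show y.val.val = u + (d - (u - x.val.val)) by omega) hgu)
    refine ⟨hsub, ?_, ?_⟩
    · -- injectivity
      intro v w hv hw hne heq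
      have hr := SimpleGraph.ConnectedComponent.eq.mp heq
      have hg := reachA _ _ hr
      have hv' : stepIdx s t v.val = i := hv
      have hw' : stepIdx s t w.val = i := hw
      exact hne (Fin.ext (uniq_lemma ht hj hp v.isLt w.isLt
        (by omega) (by omega) hg))
    · -- surjectivity
      intro c
      obtain ⟨x, hx⟩ := c.exists_rep
      obtain ⟨u, hun, hust, hug⟩ := witness_lemma ht hj hp (w := x.val.val) x.val.isLt
      have humem2 : (⟨u, hun⟩ : Fin n) ∈ D i := by
        show stepIdx s t u = i
        omega
      have humem : (⟨u, hun⟩ : Fin n) ∈ R := hsub humem2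
      refine ⟨⟨u, hun⟩, humem2, ?_⟩
      rw [← hx]
      apply SimpleGraph.ConnectedComponent.eq.mpr
      rcases le_total u x.val.val with hle | hle
      · exact reachB (x.val.val - u) ⟨⟨u, hun⟩, humem⟩ x
          (show x.val.val = u + (x.val.val - u) by omega) hug
      · exact (reachB (u - x.val.val) x ⟨⟨u, hun⟩, humem⟩
          (show u = x.val.val + (u - x.val.val) by omega) hug.symm).symm
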